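/- Let A ∈ ℝ^{n×n} be row diagonally dominant and 1 ≤ k ≤ n. Then the maximum of |det(A(I,J))| over all k×k submatrices is attained by a principal submatrix A(I,I). -/

import Mathlib

open Matrix Finset

namespace Maxvol

/-- Row diagonal dominance. -/
def RDD {n : Type*} [Fintype n] [DecidableEq n] (A : Matrix n n ℝ) : Prop :=
  ∀ i, ∑ j ∈ Finset.univ.erase i, |A i j| ≤ |A i i|

variable {n : ℕ}

lemma row_zero {A : Matrix (Fin n) (Fin n) ℝ} (hA : RDD A) {i0 : Fin n}
    (h : A i0 i0 = 0) : ∀ j, A i0 j = 0 := by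
  intro j
  have h1 := hA i0
  rw [h, abs_zero] at h1
  by_cases hj : j = i0
  · rw [hj]; exact h
  · have hm : j ∈ Finset.univ.erase i0 := Finset.mem_erase.2 ⟨hj, Finset.mem_univ j⟩
    have := Finset.single_le_sum (f := fun j => |A i0 j|) (fun _ _ => abs_nonneg _) hm
    have h0 : |A i0 j| ≤ 0 := this.trans h1
    exact abs_eq_zero.1 (le_antisymm h0 (abs_nonneg _))

/-- One step of Gaussian elimination at pivot `i0`. -/
noncomputable def elim (A : Matrix (Fin n) (Fin n) ℝ) (i0 : Fin n) :
    Matrix (Fin n) (Fin n) ℝ :=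
  Matrix.of fun i j => if i = i0 then A i j else A i j - A i i0 / A i0 i0 * A i0 j

lemma elim_pivot_row (A : Matrix (Fin n) (Fin n) ℝ) (i0 : Fin n) (j : Fin n) :
    elim A i0 i0 j = A i0 j := if_pos rfl

lemma elim_col (A : Matrix (Fin n) (Fin n) ℝ) {i0 i : Fin n} (hz : A i0 i0 ≠ 0)
    (hi : i ≠ i0) : elim A i0 i i0 = 0 := by
  simp only [elim, Matrix.of_apply, if_neg hi]
  rw [div_mul_cancel₀ _ hz, sub_self]

/-- Key estimate: elimination improves the DD "gap" of each non-pivot row. -/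
lemma elim_key {A : Matrix (Fin n) (Fin n) ℝ} (hA : RDD A) (i0 : Fin n) {i : Fin n}
    (hi : i ≠ i0) :
    |A i i| - ∑ j ∈ Finset.univ.erase i, |A i j| ≤
      |elim A i0 i i| - ∑ j ∈ Finset.univ.erase i, |elim A i0 i j| := by
  by_cases hz : A i0 i0 = 0
  · have he : ∀ j, elim A i0 i j = A i j := by
      intro j; simp [elim, if_neg hi, hz]
    simp only [he]
    exact le_rfl
  · set c : ℝ := A i i0 / A i0 i0 with hc
    have he : ∀ j, elim A i0 i j = A i j - c * A i0 j := by
      intro j; simp [elim, if_neg hi, hc]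
    have hcabs : |c| * |A i0 i0| = |A i i0| := by
      rw [← abs_mul, hc, div_mul_cancel₀ _ hz]
    have hii0 : elim A i0 i i0 = 0 := elim_col A hz hi
    have hmem : i0 ∈ Finset.univ.erase i := Finset.mem_erase.2 ⟨Ne.symm hi, Finset.mem_univ _⟩
    have hmem' : i ∈ Finset.univ.erase i0 := Finset.mem_erase.2 ⟨hi, Finset.mem_univ _⟩
    -- split off the i0 column
    have hsplit : ∑ j ∈ Finset.univ.erase i, |elim A i0 i j|
        = ∑ j ∈ (Finset.univ.erase i).erase i0, |elim A i0 i j| := by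
      rw [Finset.sum_erase_eq_sub hmem, hii0, abs_zero, sub_zero]
    have hbound : ∀ j ∈ (Finset.univ.erase i).erase i0,
        |elim A i0 i j| ≤ |A i j| + |c| * |A i0 j| := by
      intro j _
      rw [he j]
      calc |A i j - c * A i0 j| ≤ |A i j| + |c * A i0 j| := abs_sub _ _
        _ = |A i j| + |c| * |A i0 j| := by rw [abs_mul]
    have hS1 : ∑ j ∈ (Finset.univ.erase i).erase i0, |A i j|
        = (∑ j ∈ Finset.univ.erase i, |A i j|) - |A i i0| :=
      Finset.sum_erase_eq_sub hmem
    have hS2 : ∑ j ∈ (Finset.univ.erase i).erase i0, |A i0 j|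
        = (∑ j ∈ Finset.univ.erase i0, |A i0 j|) - |A i0 i| := by
      rw [Finset.erase_right_comm]
      exact Finset.sum_erase_eq_sub hmem'
    have h3 : ∑ j ∈ (Finset.univ.erase i).erase i0, |elim A i0 i j|
        ≤ ∑ j ∈ (Finset.univ.erase i).erase i0, (|A i j| + |c| * |A i0 j|) :=
      Finset.sum_le_sum hbound
    rw [Finset.sum_add_distrib, ← Finset.mul_sum, hS1, hS2] at h3
    have h4 : |c| * ((∑ j ∈ Finset.univ.erase i0, |A i0 j|) - |A i0 i|)
        ≤ |c| * (|A i0 i0| - |A i0 i|) :=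
      mul_le_mul_of_nonneg_left (sub_le_sub_right (hA i0) _) (abs_nonneg c)
    have h5 : |A i i| ≤ |elim A i0 i i| + |c| * |A i0 i| := by
      rw [he i]
      calc |A i i| = |(A i i - c * A i0 i) + c * A i0 i| := by ring_nf
        _ ≤ |A i i - c * A i0 i| + |c * A i0 i| := abs_add_le _ _
        _ = |A i i - c * A i0 i| + |c| * |A i0 i| := by rw [abs_mul]
    rw [hsplit]
    have hd : |c| * (|A i0 i0| - |A i0 i|) = |A i i0| - |c| * |A i0 i| := by
      rw [mul_sub, hcabs]
    linarith

lemma elim_rdd {A : Matrix (Fin n) (Fin n) ℝ} (hA : RDD A) (i0 : Fin n) :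
    RDD (elim A i0) := by
  intro i
  by_cases hi : i = i0
  · subst hi
    have he : ∀ j, elim A i i j = A i j := fun j => elim_pivot_row A i j
    simp only [he]
    exact hA i
  · have h1 := elim_key hA i0 hi
    have h2 := hA i
    linarith

/-- `elim` does not change determinants of submatrices whose rows contain the pivot row. -/
lemma det_submatrix_elim {m : ℕ} (A : Matrix (Fin n) (Fin n) ℝ) (i0 : Fin n)
    (f g : Fin m → Fin n) (r0 : Fin m) (hf : Function.Injective f) (hr : f r0 = i0) :
    ((elim A i0).submatrix f g).det = (A.submatrix f g).det := by
  set u : Fin m → ℝ := fun r => if r = r0 then 0 else -(A (f r) i0 / A i0 i0) with hu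
  set v : Fin m → ℝ := fun s => if s = r0 then 1 else 0 with hv
  have key : (elim A i0).submatrix f g =
      (1 + Matrix.replicateCol Unit u * Matrix.replicateRow Unit v) * (A.submatrix f g) := by
    ext r s
    have hcr : ∀ t, ((Matrix.replicateCol Unit u * Matrix.replicateRow Unit v :
        Matrix (Fin m) (Fin m) ℝ)) r t = u r * v t := by
      intro t; rw [Matrix.mul_apply]; simp
    have hrhs : (((1 + Matrix.replicateCol Unit u * Matrix.replicateRow Unit v) * (A.submatrix f g) :
        Matrix (Fin m) (Fin m) ℝ)) r s = A (f r) (g s) + u r * A (f r0) (g s) := by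
      rw [Matrix.add_mul, Matrix.one_mul, Matrix.add_apply]
      rw [Matrix.mul_apply]
      simp only [hcr]
      simp only [hcr, hv, mul_ite, mul_one, mul_zero, ite_mul, zero_mul,
        Matrix.submatrix_apply]
      rw [Finset.sum_ite_eq' Finset.univ r0]
      simp
    rw [hrhs]
    by_cases hrr : r = r0
    · subst hrr
      simp only [hu, if_pos rfl, zero_mul, add_zero, Matrix.submatrix_apply]
      simp [elim, hr]
    · have hfr : f r ≠ i0 := fun h => hrr (hf (h.trans hr.symm))
      simp only [Matrix.submatrix_apply, elim, Matrix.of_apply, if_neg hfr, hu, if_neg hrr, hr]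
      ring
  rw [key, Matrix.det_mul, Matrix.det_one_add_replicateCol_mul_replicateRow]
  have hvu : v ⬝ᵥ u = 0 := by
    simp only [dotProduct, hv, hu, ite_mul, one_mul, zero_mul]
    rw [Finset.sum_ite_eq' Finset.univ r0]
    simp
  rw [hvu, add_zero, one_mul]

/-- Cofactor expansion when column `0` has a single nonzero entry at row `0`. -/
lemma det_eq_pivot_mul {k : ℕ} (M : Matrix (Fin (k + 1)) (Fin (k + 1)) ℝ)
    (h : ∀ i, i ≠ 0 → M i 0 = 0) :
    M.det = M 0 0 * (M.submatrix Fin.succ Fin.succ).det := by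
  rw [Matrix.det_succ_column_zero, Finset.sum_eq_single 0]
  · simp [Fin.succAbove_zero]
  · intro i _ hi; rw [h i hi]; ring
  · simp

/-- Hadamard-type bound: `|det M| ≤` product of the row `ℓ¹`-norms. -/
lemma abs_det_le_prod_sum {k : ℕ} (M : Matrix (Fin k) (Fin k) ℝ) :
    |M.det| ≤ ∏ i, ∑ j, |M i j| := by
  rw [← Matrix.det_transpose, Matrix.det_apply]
  refine (Finset.abs_sum_le_sum_abs _ _).trans ?_
  have h1 : ∀ σ : Equiv.Perm (Fin k),
      |Equiv.Perm.sign σ • ∏ i, Mᵀ (σ i) i| = ∏ i, |M i (σ i)| := by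
    intro σ
    have habs : |Equiv.Perm.sign σ • ∏ i, Mᵀ (σ i) i| = |∏ i, Mᵀ (σ i) i| := by
      rcases Int.units_eq_one_or (Equiv.Perm.sign σ) with h | h <;> rw [h] <;>
        simp [Units.smul_def]
    rw [habs, Finset.abs_prod]
    exact Finset.prod_congr rfl fun i _ => by rw [Matrix.transpose_apply]
  have h2 : ∑ σ : Equiv.Perm (Fin k), ∏ i, |M i (σ i)|
      ≤ ∑ p : Fin k → Fin k, ∏ i, |M i (p i)| := by
    have he : ∑ σ : Equiv.Perm (Fin k), ∏ i, |M i (σ i)|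
        = ∑ p ∈ Finset.univ.image (fun σ : Equiv.Perm (Fin k) => ⇑σ), ∏ i, |M i (p i)| :=
      (Finset.sum_image (f := fun p : Fin k → Fin k => ∏ i, |M i (p i)|)
        (fun x _ y _ h => Equiv.coe_fn_injective h)).symm
    rw [he]
    exact Finset.sum_le_sum_of_subset_of_nonneg (Finset.subset_univ _)
      (fun _ _ _ => Finset.prod_nonneg fun _ _ => abs_nonneg _)
  have h3 : ∑ p : Fin k → Fin k, ∏ i, |M i (p i)| = ∏ i, ∑ j, |M i j| := by
    rw [Finset.prod_univ_sum, Fintype.piFinset_univ]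
  calc ∑ σ : Equiv.Perm (Fin k), |Equiv.Perm.sign σ • ∏ i, Mᵀ (σ i) i|
      = ∑ σ : Equiv.Perm (Fin k), ∏ i, |M i (σ i)| := Finset.sum_congr rfl fun σ _ => h1 σ
    _ ≤ ∑ p : Fin k → Fin k, ∏ i, |M i (p i)| := h2
    _ = ∏ i, ∑ j, |M i j| := h3

/-- Ostrowski's lower bound for the determinant of a diagonally dominant matrix. -/
lemma ostrowski : ∀ {k : ℕ} (M : Matrix (Fin k) (Fin k) ℝ), RDD M →
    ∏ i, (|M i i| - ∑ j ∈ Finset.univ.erase i, |M i j|) ≤ |M.det| := by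
  intro k
  induction k with
  | zero => intro M _; simp [Matrix.det_fin_zero]
  | succ k ih =>
    intro M hM
    have hfac : ∀ i, 0 ≤ |M i i| - ∑ j ∈ Finset.univ.erase i, |M i j| :=
      fun i => sub_nonneg.2 (hM i)
    by_cases hz : M 0 0 = 0
    · have h1 := hM 0
      rw [hz, abs_zero] at h1
      have h2 : (0:ℝ) ≤ ∑ j ∈ Finset.univ.erase 0, |M 0 j| :=
        Finset.sum_nonneg fun _ _ => abs_nonneg _
      have hfac0 : |M 0 0| - ∑ j ∈ Finset.univ.erase 0, |M 0 j| = 0 := by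
        rw [hz, abs_zero]; linarith
      calc ∏ i, (|M i i| - ∑ j ∈ Finset.univ.erase i, |M i j|) = 0 :=
            Finset.prod_eq_zero (Finset.mem_univ 0) hfac0
        _ ≤ |M.det| := abs_nonneg _
    · set M' := elim M 0 with hM'def
      have hM' : RDD M' := elim_rdd hM 0
      have hdet : M'.det = M.det := by
        have h := det_submatrix_elim M 0 id id 0 Function.injective_id rfl
        simpa using h
      have hcol : ∀ i : Fin (k+1), i ≠ 0 → M' i 0 = 0 := fun i hi => elim_col M hz hi
      have hpiv : M' 0 0 = M 0 0 := elim_pivot_row M 0 0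
      set N := M'.submatrix Fin.succ Fin.succ with hNdef
      -- reindexing the off-diagonal sums of N
      have hsum : ∀ r : Fin k, ∑ j ∈ Finset.univ.erase r, |N r j|
          = ∑ j ∈ Finset.univ.erase r.succ, |M' r.succ j| := by
        intro r
        have himg : (Finset.univ.erase r).image Fin.succ
            = (Finset.univ.erase r.succ).erase 0 := by
          ext j'
          simp only [Finset.mem_image, Finset.mem_erase, Finset.mem_univ, and_true]
          constructor
          · rintro ⟨j, hj, rfl⟩
            exact ⟨Fin.succ_ne_zero j, fun h => hj (Fin.succ_injective _ h)⟩
          · rintro ⟨h0, hne⟩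
            obtain ⟨j, rfl⟩ := Fin.exists_succ_eq_of_ne_zero h0
            exact ⟨j, fun h => hne (by rw [h]), rfl⟩
        have h1 : ∑ j ∈ Finset.univ.erase r, |N r j|
            = ∑ j' ∈ (Finset.univ.erase r).image Fin.succ, |M' r.succ j'| := by
          rw [Finset.sum_image (f := fun j' => |M' r.succ j'|)
            (fun x _ y _ h => Fin.succ_injective _ h)]
          rfl
        rw [h1, himg, Finset.sum_erase_eq_sub
          (Finset.mem_erase.2 ⟨(Fin.succ_ne_zero r).symm, Finset.mem_univ _⟩),
          hcol r.succ (Fin.succ_ne_zero r), abs_zero, sub_zero]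
      have hN : RDD N := by
        intro r
        rw [hsum r]
        exact hM' r.succ
      have hfacN : ∀ r : Fin k,
          |M r.succ r.succ| - ∑ j ∈ Finset.univ.erase r.succ, |M r.succ j|
            ≤ |N r r| - ∑ j ∈ Finset.univ.erase r, |N r j| := by
        intro r
        rw [hsum r]
        exact elim_key hM 0 (Fin.succ_ne_zero r)
      have hih := ih N hN
      have hprod : ∏ r : Fin k, (|M r.succ r.succ| - ∑ j ∈ Finset.univ.erase r.succ, |M r.succ j|)
          ≤ ∏ r : Fin k, (|N r r| - ∑ j ∈ Finset.univ.erase r, |N r j|) :=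
        Finset.prod_le_prod (fun r _ => hfac r.succ) (fun r _ => hfacN r)
      have hdetM : |M.det| = |M 0 0| * |N.det| := by
        rw [← hdet, det_eq_pivot_mul M' hcol, abs_mul, hpiv]
      rw [hdetM, Fin.prod_univ_succ]
      have h0le : |M 0 0| - ∑ j ∈ Finset.univ.erase 0, |M 0 j| ≤ |M 0 0| := by
        have : (0:ℝ) ≤ ∑ j ∈ Finset.univ.erase 0, |M 0 j| :=
          Finset.sum_nonneg fun _ _ => abs_nonneg _
        linarith
      refine mul_le_mul h0le (hprod.trans hih) (Finset.prod_nonneg fun r _ => hfac r.succ)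
        (abs_nonneg _)

/-- The principal submatrix of an RDD matrix is RDD. -/
lemma rdd_submatrix {k : ℕ} {A : Matrix (Fin n) (Fin n) ℝ} (hA : RDD A)
    {f : Fin k → Fin n} (hf : Function.Injective f) : RDD (A.submatrix f f) := by
  intro r
  have h1 : ∑ r' ∈ Finset.univ.erase r, |A (f r) (f r')|
      = ∑ j ∈ (Finset.univ.erase r).image f, |A (f r) j| :=
    (Finset.sum_image (f := fun j => |A (f r) j|) (fun x _ y _ h => hf h)).symm
  have h2 : (Finset.univ.erase r).image f ⊆ Finset.univ.erase (f r) := by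
    intro j hj
    obtain ⟨r', hr', rfl⟩ := Finset.mem_image.1 hj
    exact Finset.mem_erase.2 ⟨fun h => (Finset.mem_erase.1 hr').1 (hf h), Finset.mem_univ _⟩
  calc ∑ r' ∈ Finset.univ.erase r, |(A.submatrix f f) r r'|
      = ∑ j ∈ (Finset.univ.erase r).image f, |A (f r) j| := h1
    _ ≤ ∑ j ∈ Finset.univ.erase (f r), |A (f r) j| :=
        Finset.sum_le_sum_of_subset_of_nonneg h2 (fun _ _ _ => abs_nonneg _)
    _ ≤ |A (f r) (f r)| := hA (f r)

/-- Core lemma: for an RDD matrix, any `k×k` submatrix determinant is dominated by the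
principal one on the same rows. -/
lemma main_lemma : ∀ (k : ℕ) {n : ℕ} (A : Matrix (Fin n) (Fin n) ℝ), RDD A →
    ∀ f g : Fin k → Fin n, Function.Injective f → Function.Injective g →
    |(A.submatrix f g).det| ≤ |(A.submatrix f f).det| := by
  intro k
  induction k with
  | zero =>
    intro n A _ f g _ _
    have h1 : (A.submatrix f g).det = 1 := Matrix.det_fin_zero
    have h2 : (A.submatrix f f).det = 1 := Matrix.det_fin_zero
    rw [h1, h2]
  | succ k ih =>
    intro n A hA f g hf hg
    by_cases hint : ∃ r s, f r = g s
    · obtain ⟨r0, s0, hrs⟩ := hint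
      set σ : Equiv.Perm (Fin (k+1)) := Equiv.swap 0 r0 with hσ
      set τ : Equiv.Perm (Fin (k+1)) := Equiv.swap 0 s0 with hτ
      set f' : Fin (k+1) → Fin n := f ∘ σ with hf'def
      set g' : Fin (k+1) → Fin n := g ∘ τ with hg'def
      have hf' : Function.Injective f' := hf.comp σ.injective
      have hg' : Function.Injective g' := hg.comp τ.injective
      set i0 : Fin n := f r0 with hi0
      have hf0 : f' 0 = i0 := by
        show f (σ 0) = i0
        rw [hσ, Equiv.swap_apply_left, hi0]
      have hg0 : g' 0 = i0 := by
        show g (τ 0) = i0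
        rw [hτ, Equiv.swap_apply_left, hi0]
        exact hrs.symm
      have habs1 : |(A.submatrix f' g').det| = |(A.submatrix f g).det| := by
        have h : A.submatrix f' g' = (A.submatrix f g).submatrix ⇑σ ⇑τ := by
          rw [Matrix.submatrix_submatrix]
        rw [h]
        exact Matrix.abs_det_submatrix_equiv_equiv σ τ (A.submatrix f g)
      have habs2 : |(A.submatrix f' f').det| = |(A.submatrix f f).det| := by
        have h : A.submatrix f' f' = (A.submatrix f f).submatrix ⇑σ ⇑σ := by
          rw [Matrix.submatrix_submatrix]
        rw [h]
        exact Matrix.abs_det_submatrix_equiv_equiv σ σ (A.submatrix f f)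
      rw [← habs1, ← habs2]
      by_cases hz : A i0 i0 = 0
      · have hrow0 : ∀ j, A i0 j = 0 := row_zero hA hz
        have hzero : (A.submatrix f' g').det = 0 := by
          apply Matrix.det_eq_zero_of_row_eq_zero 0
          intro j
          rw [Matrix.submatrix_apply, hf0]
          exact hrow0 _
        rw [hzero, abs_zero]
        exact abs_nonneg _
      · set A' := elim A i0 with hA'def
        have hA' : RDD A' := elim_rdd hA i0
        have h1 : (A'.submatrix f' g').det = (A.submatrix f' g').det :=
          det_submatrix_elim A i0 f' g' 0 hf' hf0
        have h2 : (A'.submatrix f' f').det = (A.submatrix f' f').det :=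
          det_submatrix_elim A i0 f' f' 0 hf' hf0
        have hcolg : ∀ i : Fin (k+1), i ≠ 0 → (A'.submatrix f' g') i 0 = 0 := by
          intro i hi
          rw [Matrix.submatrix_apply, hg0]
          exact elim_col A hz (fun h => hi (hf' (h.trans hf0.symm)))
        have hcolf : ∀ i : Fin (k+1), i ≠ 0 → (A'.submatrix f' f') i 0 = 0 := by
          intro i hi
          rw [Matrix.submatrix_apply, hf0]
          exact elim_col A hz (fun h => hi (hf' (h.trans hf0.symm)))
        rw [← h1, ← h2, det_eq_pivot_mul _ hcolg, det_eq_pivot_mul _ hcolf,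
          abs_mul, abs_mul]
        have hminor : |((A'.submatrix f' g').submatrix Fin.succ Fin.succ).det|
            ≤ |((A'.submatrix f' f').submatrix Fin.succ Fin.succ).det| := by
          rw [Matrix.submatrix_submatrix, Matrix.submatrix_submatrix]
          exact ih A' hA' (f' ∘ Fin.succ) (g' ∘ Fin.succ)
            (hf'.comp (Fin.succ_injective _)) (hg'.comp (Fin.succ_injective _))
        have hpiv_eq : (A'.submatrix f' g') 0 0 = (A'.submatrix f' f') 0 0 := by
          rw [Matrix.submatrix_apply, Matrix.submatrix_apply, hg0, hf0]
        rw [hpiv_eq]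
        exact mul_le_mul_of_nonneg_left hminor (abs_nonneg _)
    · push_neg at hint
      have hMrdd : RDD (A.submatrix f f) := rdd_submatrix hA hf
      have hkey : ∀ r : Fin (k+1), ∑ s, |A (f r) (g s)|
          ≤ |A (f r) (f r)| - ∑ r' ∈ Finset.univ.erase r, |A (f r) (f r')| := by
        intro r
        set T1 : Finset (Fin n) := Finset.univ.image g with hT1
        set T2 : Finset (Fin n) := (Finset.univ.erase r).image f with hT2
        have hd : Disjoint T1 T2 := by
          rw [Finset.disjoint_left]
          intro j hj1 hj2
          obtain ⟨s, _, rfl⟩ := Finset.mem_image.1 hj1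
          obtain ⟨r', _, h⟩ := Finset.mem_image.1 hj2
          exact hint r' s h
        have hsub : T1 ∪ T2 ⊆ Finset.univ.erase (f r) := by
          intro j hj
          rcases Finset.mem_union.1 hj with hj | hj
          · obtain ⟨s, _, rfl⟩ := Finset.mem_image.1 hj
            exact Finset.mem_erase.2 ⟨fun h => hint r s h.symm, Finset.mem_univ _⟩
          · obtain ⟨r', hr', rfl⟩ := Finset.mem_image.1 hj
            exact Finset.mem_erase.2
              ⟨fun h => (Finset.mem_erase.1 hr').1 (hf h), Finset.mem_univ _⟩
        have e1 : ∑ s, |A (f r) (g s)| = ∑ j ∈ T1, |A (f r) j| :=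
          (Finset.sum_image (f := fun j => |A (f r) j|) (fun x _ y _ h => hg h)).symm
        have e2 : ∑ r' ∈ Finset.univ.erase r, |A (f r) (f r')| = ∑ j ∈ T2, |A (f r) j| :=
          (Finset.sum_image (f := fun j => |A (f r) j|) (fun x _ y _ h => hf h)).symm
        have e3 : ∑ j ∈ T1, |A (f r) j| + ∑ j ∈ T2, |A (f r) j|
            = ∑ j ∈ T1 ∪ T2, |A (f r) j| := (Finset.sum_union hd).symm
        have e4 : ∑ j ∈ T1 ∪ T2, |A (f r) j| ≤ ∑ j ∈ Finset.univ.erase (f r), |A (f r) j| :=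
          Finset.sum_le_sum_of_subset_of_nonneg hsub (fun _ _ _ => abs_nonneg _)
        have e5 := hA (f r)
        rw [e1, e2]
        linarith
      calc |(A.submatrix f g).det|
          ≤ ∏ r, ∑ s, |(A.submatrix f g) r s| := abs_det_le_prod_sum _
        _ ≤ ∏ r : Fin (k+1), (|(A.submatrix f f) r r|
              - ∑ r' ∈ Finset.univ.erase r, |(A.submatrix f f) r r'|) := by
            refine Finset.prod_le_prod (fun r _ => Finset.sum_nonneg fun _ _ => abs_nonneg _)
              (fun r _ => ?_)
            exact hkey r
        _ ≤ |(A.submatrix f f).det| := ostrowski _ hMrdd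

end Maxvol

/-- The `k × k` submatrix of `A` with rows indexed by `I` and columns by `J`. -/
noncomputable def subm {n k : ℕ} (A : Matrix (Fin n) (Fin n) ℝ)
    (I J : Finset (Fin n)) (hI : I.card = k) (hJ : J.card = k) :
    Matrix (Fin k) (Fin k) ℝ :=
  A.submatrix (fun i => (I.orderIsoOfFin hI i : Fin n)) (fun j => (J.orderIsoOfFin hJ j : Fin n))

/-- For a row diagonally dominant matrix, the maximum volume `k × k` submatrix
can be chosen to be a principal submatrix. -/
theorem maxvol_principal_of_diagDominant {n k : ℕ} (A : Matrix (Fin n) (Fin n) ℝ)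
    (hdd : ∀ i : Fin n, ∑ j ∈ Finset.univ.erase i, |A i j| ≤ |A i i|)
    (hk1 : 1 ≤ k) (hkn : k ≤ n) :
    ∃ (I : Finset (Fin n)) (hI : I.card = k),
      ∀ (I' J' : Finset (Fin n)) (hI' : I'.card = k) (hJ' : J'.card = k),
        |(subm A I' J' hI' hJ').det| ≤ |(subm A I I hI hI).det| := by
  classical
  have hA : Maxvol.RDD A := hdd
  set F : Finset (Fin n) → ℝ := fun I =>
    if h : I.card = k then |(subm A I I h h).det| else 0 with hF
  have hne : (Finset.powersetCard k (Finset.univ : Finset (Fin n))).Nonempty := by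
    rw [Finset.powersetCard_nonempty]
    simpa using hkn
  obtain ⟨I, hIm, hImax⟩ := Finset.exists_max_image _ F hne
  have hI : I.card = k := (Finset.mem_powersetCard.1 hIm).2
  refine ⟨I, hI, ?_⟩
  intro I' J' hI' hJ'
  have hfinj : Function.Injective (fun i => (I'.orderIsoOfFin hI' i : Fin n)) :=
    fun a b h => (I'.orderIsoOfFin hI').injective (Subtype.ext h)
  have hginj : Function.Injective (fun j => (J'.orderIsoOfFin hJ' j : Fin n)) :=
    fun a b h => (J'.orderIsoOfFin hJ').injective (Subtype.ext h)
  have step1 : |(subm A I' J' hI' hJ').det| ≤ |(subm A I' I' hI' hI').det| :=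
    Maxvol.main_lemma k A hA _ _ hfinj hginj
  have hmem' : I' ∈ Finset.powersetCard k (Finset.univ : Finset (Fin n)) :=
    Finset.mem_powersetCard.2 ⟨Finset.subset_univ _, hI'⟩
  have step2 := hImax I' hmem'
  rw [hF] at step2
  simp only [dif_pos hI', dif_pos hI] at step2
  exact step1.trans step2
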